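/- Let G be a graph with an edge e = vw contained in no even cycle of G. Then p(G; z) = p(G \ e; z) + z · p(G − {v,w}; z), where G \ e is G with the edge e deleted and G − {v,w} is G with the vertices v and w deleted. -/

import Mathlib

open Polynomial

variable {V : Type*}

/-- `M` (a finite set of edges) is a matching of the graph `G`:
its members are edges of `G` and no two distinct members share an endpoint. -/
def IsGraphMatching (G : SimpleGraph V) (M : Finset (Sym2 V)) : Prop :=
  (M : Set (Sym2 V)) ⊆ G.edgeSet ∧
    ∀ e ∈ M, ∀ f ∈ M, e ≠ f → ∀ x, x ∈ e → x ∉ f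

/-- The set of vertices covered by the edge set `M` is exactly `S`. -/
def Covers (M : Finset (Sym2 V)) (S : Finset V) : Prop :=
  ∀ x, x ∈ S ↔ ∃ e ∈ M, x ∈ e

/-- `M` is a perfect matching of the induced subgraph `G[S]`. -/
def IsPerfectMatchingOn (G : SimpleGraph V) (M : Finset (Sym2 V)) (S : Finset V) : Prop :=
  IsGraphMatching G M ∧ Covers M S

/-- `S` is a perfectly matchable set of `G`. -/
def IsPMS (G : SimpleGraph V) (S : Finset V) : Prop :=
  ∃ M, IsPerfectMatchingOn G M S

open Classical in
/-- The perfectly matchable set polynomial of the subgraph of `G` induced on the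
ground vertex set `A`: the generating function `∑ p_{2k} z^k` where `p_{2k}` is the number
of perfectly matchable sets `S ⊆ A` with `|S| = 2k`. -/
noncomputable def pmPoly [Fintype V] (G : SimpleGraph V) (A : Finset V) : Polynomial ℤ :=
  ∑ S ∈ A.powerset, if IsPMS G S then X ^ (S.card / 2) else 0

/-- `G` has no cycle of even length. -/
def NoEvenCycle (G : SimpleGraph V) : Prop :=
  ∀ (v : V) (c : G.Walk v v), c.IsCycle → ¬ Even c.length

namespace PMSAux

open Classical in
noncomputable def partner (M : Finset (Sym2 V)) (x : V) : V :=
  if h : ∃ y, s(x, y) ∈ M then h.choose else x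

variable {G : SimpleGraph V} {M : Finset (Sym2 V)} {S : Finset V} {x y : V}

lemma exists_partner (hC : Covers M S) (hx : x ∈ S) : ∃ y, s(x, y) ∈ M := by
  obtain ⟨e, heM, hxe⟩ := (hC x).1 hx
  induction e with
  | _ a b =>
    rcases Sym2.mem_iff.1 hxe with rfl | rfl
    · exact ⟨b, heM⟩
    · exact ⟨a, by rwa [Sym2.eq_swap]⟩

lemma partner_edge_mem (hC : Covers M S) (hx : x ∈ S) : s(x, partner M x) ∈ M := by
  have h : ∃ y, s(x, y) ∈ M := exists_partner hC hx
  rw [partner, dif_pos h]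
  exact h.choose_spec

lemma partner_eq (hM : IsGraphMatching G M) (hxy : s(x, y) ∈ M) : partner M x = y := by
  have h : ∃ y, s(x, y) ∈ M := ⟨y, hxy⟩
  rw [partner, dif_pos h]
  have hs := h.choose_spec
  by_contra hne
  have hedne : s(x, h.choose) ≠ s(x, y) := by
    intro hq; exact hne (Sym2.congr_right.mp hq)
  exact hM.2 _ hs _ hxy hedne x (Sym2.mem_mk_left _ _) (Sym2.mem_mk_left _ _)

lemma partner_ne (hM : IsGraphMatching G M) (hC : Covers M S) (hx : x ∈ S) :
    partner M x ≠ x := by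
  intro h
  have := hM.1 (partner_edge_mem hC hx)
  rw [h, SimpleGraph.mem_edgeSet] at this
  exact G.irrefl this

lemma partner_mem (hC : Covers M S) (hx : x ∈ S) : partner M x ∈ S := by
  exact (hC _).2 ⟨_, partner_edge_mem hC hx, Sym2.mem_mk_right _ _⟩

lemma partner_adj (hM : IsGraphMatching G M) (hC : Covers M S) (hx : x ∈ S) :
    G.Adj x (partner M x) := by
  have := hM.1 (partner_edge_mem hC hx)
  rwa [SimpleGraph.mem_edgeSet] at this

lemma partner_partner (hM : IsGraphMatching G M) (hC : Covers M S) (hx : x ∈ S) :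
    partner M (partner M x) = x := by
  apply partner_eq hM
  rw [Sym2.eq_swap]
  exact partner_edge_mem hC hx


section Seq

variable (M M' : Finset (Sym2 V)) (v : V)

noncomputable def seq : ℕ → V
  | 0 => v
  | (n+1) => if n % 2 = 0 then partner M (seq n) else partner M' (seq n)

variable {G : SimpleGraph V} {S : Finset V}

lemma seq_succ_even {n : ℕ} (h : n % 2 = 0) :
    seq M M' v (n + 1) = partner M (seq M M' v n) := by
  show (if n % 2 = 0 then _ else _) = _
  rw [if_pos h]

lemma seq_succ_odd {n : ℕ} (h : ¬ n % 2 = 0) :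
    seq M M' v (n + 1) = partner M' (seq M M' v n) := by
  show (if n % 2 = 0 then _ else _) = _
  rw [if_neg h]

lemma seq_succ_eq {n j : ℕ} (hnj : n % 2 = j % 2) (h : seq M M' v n = seq M M' v j) :
    seq M M' v (n + 1) = seq M M' v (j + 1) := by
  show (if n % 2 = 0 then _ else _) = (if j % 2 = 0 then _ else _)
  rw [hnj, h]

variable (hM : IsGraphMatching G M) (hC : Covers M S)
    (hM' : IsGraphMatching G M') (hC' : Covers M' S) (hv : v ∈ S)

include hC hC' hv in
lemma seq_mem : ∀ n, seq M M' v n ∈ S := by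
  intro n
  induction n with
  | zero => exact hv
  | succ k ih =>
    show (if k % 2 = 0 then partner M (seq M M' v k) else partner M' (seq M M' v k)) ∈ S
    split
    · exact partner_mem hC ih
    · exact partner_mem hC' ih

include hM hC hM' hC' hv in
lemma seq_back {n : ℕ} :
    (if n % 2 = 0 then partner M (seq M M' v (n+1)) else partner M' (seq M M' v (n+1)))
      = seq M M' v n := by
  by_cases h : n % 2 = 0
  · rw [if_pos h, seq_succ_even M M' v h,
      partner_partner hM hC (seq_mem M M' v hC hC' hv n)]
  · rw [if_neg h, seq_succ_odd M M' v h,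
      partner_partner hM' hC' (seq_mem M M' v hC hC' hv n)]

include hM hC hM' hC' hv in
lemma seq_pred_eq {n j : ℕ} (hnj : n % 2 = j % 2) (h : seq M M' v (n+1) = seq M M' v (j+1)) :
    seq M M' v n = seq M M' v j := by
  rw [← seq_back M M' v hM hC hM' hC' hv (n := n), ← seq_back M M' v hM hC hM' hC' hv (n := j),
    hnj, h]

lemma seq_shift_up (t : ℕ) {n j : ℕ} (hnj : n % 2 = j % 2) (h : seq M M' v n = seq M M' v j) :
    seq M M' v (n + t) = seq M M' v (j + t) := by
  induction t with
  | zero => exact h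
  | succ k ih =>
    have hp : (n + k) % 2 = (j + k) % 2 := by omega
    exact seq_succ_eq M M' v hp ih

include hM hC hM' hC' hv in
lemma seq_shift_down (t : ℕ) {n j : ℕ} (hnj : n % 2 = j % 2)
    (h : seq M M' v (n + t) = seq M M' v (j + t)) :
    seq M M' v n = seq M M' v j := by
  induction t with
  | zero => exact h
  | succ k ih =>
    apply ih
    have hp : (n + k) % 2 = (j + k) % 2 := by omega
    exact seq_pred_eq M M' v hM hC hM' hC' hv hp h

include hM hC hM' hC' hv in
lemma seq_step_ne (n : ℕ) : seq M M' v (n + 1) ≠ seq M M' v n := by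
  by_cases h : n % 2 = 0
  · rw [seq_succ_even M M' v h]
    exact partner_ne hM hC (seq_mem M M' v hC hC' hv n)
  · rw [seq_succ_odd M M' v h]
    exact partner_ne hM' hC' (seq_mem M M' v hC hC' hv n)

include hM hC hM' hC' hv in
/-- no equal values at indices of opposite parity -/
lemma seq_nogap : ∀ d n, ¬ (n % 2 = (n + d) % 2) → seq M M' v n ≠ seq M M' v (n + d) := by
  intro d
  induction d using Nat.strong_induction_on with
  | _ d ih =>
    intro n hpar heq
    match d, hpar, heq with
    | 0, hpar, heq => exact hpar rfl
    | 1, hpar, heq => exact seq_step_ne M M' v hM hC hM' hC' hv n heq.symm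
    | (e+2), hpar, heq =>
      have key : seq M M' v (n + 1) = seq M M' v (n + 1 + e) := by
        have h1 : seq M M' v (n + 1) =
            (if n % 2 = 0 then partner M (seq M M' v n) else partner M' (seq M M' v n)) := rfl
        have hpar2 : (n + e + 1) % 2 = n % 2 := by omega
        have h2 : (if (n + e + 1) % 2 = 0 then partner M (seq M M' v (n + e + 1 + 1))
            else partner M' (seq M M' v (n + e + 1 + 1))) = seq M M' v (n + e + 1) :=
          seq_back M M' v hM hC hM' hC' hv
        have h3 : n + e + 1 + 1 = n + (e + 2) := by omega
        rw [h3, ← heq] at h2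
        rw [hpar2] at h2
        have h4 : n + 1 + e = n + e + 1 := by omega
        rw [h4, ← h2, h1]
      exact ih e (by omega) (n + 1) (by omega) key

end Seq


lemma exists_walk (G : SimpleGraph V) (f : ℕ → V) (hadj : ∀ n, G.Adj (f n) (f (n+1))) :
    ∀ k, ∃ p : G.Walk (f 0) (f k), p.length = k ∧
      p.support = (List.range (k+1)).map f ∧
      p.edges = (List.range k).map (fun t => s(f t, f (t+1))) := by
  intro k
  induction k with
  | zero =>
    refine ⟨SimpleGraph.Walk.nil, rfl, ?_, rfl⟩
    simp [List.range_succ]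
  | succ k ih =>
    obtain ⟨p, hl, hs, he⟩ := ih
    refine ⟨p.concat (hadj k), ?_, ?_, ?_⟩
    · rw [SimpleGraph.Walk.length_concat, hl]
    · rw [SimpleGraph.Walk.support_concat, hs]
      simp [List.range_succ]
    · rw [SimpleGraph.Walk.edges_concat, he, List.concat_eq_append]
      simp [List.range_succ]

section Key

variable {G : SimpleGraph V} {M M' : Finset (Sym2 V)} {S : Finset V} {v w : V}

lemma seq_return [Fintype V] (hM : IsGraphMatching G M) (hC : Covers M S)
    (hM' : IsGraphMatching G M') (hC' : Covers M' S) (hv : v ∈ S) :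
    ∃ n, 0 < n ∧ seq M M' v (2 * n) = v := by
  obtain ⟨i, j, hne, hij⟩ :=
    Finite.exists_ne_map_eq_of_infinite (fun n : ℕ => seq M M' v (2 * n))
  rcases Nat.lt_or_ge i j with h | h
  · refine ⟨j - i, by omega, ?_⟩
    have := seq_shift_down M M' v hM hC hM' hC' hv (2 * i)
      (n := 0) (j := 2 * (j - i)) (by omega) ?_
    · exact this.symm
    · simp only [Nat.zero_add]
      have hji : 2 * (j - i) + 2 * i = 2 * j := by omega
      rw [hji]; exact hij
  · have h' : j < i := by omega
    refine ⟨i - j, by omega, ?_⟩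
    have := seq_shift_down M M' v hM hC hM' hC' hv (2 * j)
      (n := 0) (j := 2 * (i - j)) (by omega) ?_
    · exact this.symm
    · simp only [Nat.zero_add]
      have hji : 2 * (i - j) + 2 * j = 2 * i := by omega
      rw [hji]; exact hij.symm

lemma two_matchings_contra [Fintype V] (hvw : G.Adj v w)
    (hM : IsPerfectMatchingOn G M S) (hM' : IsPerfectMatchingOn G M' S)
    (heM' : s(v, w) ∈ M') (heM : s(v, w) ∉ M)
    (he : ∀ (a : V) (c : G.Walk a a), c.IsCycle → Even c.length → s(v, w) ∉ c.edges) :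
    False := by
  obtain ⟨hM1, hC⟩ := hM
  obtain ⟨hM1', hC'⟩ := hM'
  have hv : v ∈ S := (hC' v).2 ⟨_, heM', Sym2.mem_mk_left _ _⟩
  have hret := seq_return hM1 hC hM1' hC' hv
  classical
  set m := Nat.find hret with hmdef
  have hm0 : 0 < m := (Nat.find_spec hret).1
  have hm2 : seq M M' v (2 * m) = v := (Nat.find_spec hret).2
  have hmin : ∀ k, 0 < k → k < m → seq M M' v (2 * k) ≠ v := by
    intro k hk0 hkm hkv
    exact Nat.find_min hret hkm ⟨hk0, hkv⟩
  -- partner of v in M' is w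
  have hpw : partner M' v = w := partner_eq hM1' heM'
  -- m ≥ 2
  have hm2' : 2 ≤ m := by
    by_contra h
    have hm1 : m = 1 := by omega
    have h2 : seq M M' v 2 = v := by
      have h2' := hm2
      rw [hm1] at h2'
      simpa using h2'
    have h1e : seq M M' v 1 = partner M (seq M M' v 0) := seq_succ_even M M' v rfl
    have h2e : seq M M' v 2 = partner M' (seq M M' v 1) := seq_succ_odd M M' v (by norm_num)
    have hs1 : seq M M' v 1 ∈ S := seq_mem M M' v hC hC' hv 1
    have hkey : partner M' (seq M M' v 2) = seq M M' v 1 := by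
      rw [h2e, partner_partner hM1' hC' hs1]
    rw [h2, hpw] at hkey
    apply heM
    have hmm : s(seq M M' v 0, seq M M' v 1) ∈ M := by
      rw [h1e]
      exact partner_edge_mem hC (seq_mem M M' v hC hC' hv 0)
    rwa [show seq M M' v 0 = v from rfl, ← hkey] at hmm
  -- injectivity
  have K : ∀ i j, i < j → j ≤ 2 * m → (0 < i ∨ j < 2 * m) →
      seq M M' v i ≠ seq M M' v j := by
    intro i j hij hj2 hcase heq
    by_cases hp : i % 2 = j % 2
    · have hsh := seq_shift_up M M' v (2 * m - j) hp heq
      have hj : j + (2 * m - j) = 2 * m := by omega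
      rw [hj, hm2] at hsh
      obtain ⟨k, hk⟩ : ∃ k, i + (2 * m - j) = 2 * k := ⟨(i + (2 * m - j)) / 2, by omega⟩
      rw [hk] at hsh
      exact hmin k (by omega) (by omega) hsh
    · refine seq_nogap M M' v hM1 hC hM1' hC' hv (j - i) i (by omega) ?_
      rw [show i + (j - i) = j by omega]
      exact heq
  -- adjacency and edge membership
  have hadj : ∀ n, G.Adj (seq M M' v n) (seq M M' v (n + 1)) := by
    intro n
    by_cases h : n % 2 = 0
    · rw [seq_succ_even M M' v h]
      exact partner_adj hM1 hC (seq_mem M M' v hC hC' hv n)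
    · rw [seq_succ_odd M M' v h]
      exact partner_adj hM1' hC' (seq_mem M M' v hC hC' hv n)
  -- last vertex is w
  have hlast : seq M M' v (2 * m - 1) = w := by
    have hodd : ¬ (2 * m - 1) % 2 = 0 := by omega
    have h1 : seq M M' v (2 * m - 1 + 1) = partner M' (seq M M' v (2 * m - 1)) :=
      seq_succ_odd M M' v hodd
    have h2 : 2 * m - 1 + 1 = 2 * m := by omega
    have hs : seq M M' v (2 * m - 1) ∈ S := seq_mem M M' v hC hC' hv _
    have h4 : partner M' (seq M M' v (2 * m - 1 + 1)) = seq M M' v (2 * m - 1) := by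
      rw [h1, partner_partner hM1' hC' hs]
    rw [h2, hm2, hpw] at h4
    exact h4.symm
  -- build the walk
  obtain ⟨p, hlen, hsup, hedg⟩ := exists_walk G (seq M M' v) hadj (2 * m)
  have hs0 : seq M M' v 0 = v := rfl
  let c : G.Walk v v := (p.copy hs0 hm2)
  have hclen : c.length = 2 * m := by
    rw [SimpleGraph.Walk.length_copy, hlen]
  have hcedges : c.edges = (List.range (2 * m)).map
      (fun t => s(seq M M' v t, seq M M' v (t + 1))) := by
    rw [SimpleGraph.Walk.edges_copy, hedg]
  have hcsup : c.support = (List.range (2 * m + 1)).map (seq M M' v) := by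
    rw [SimpleGraph.Walk.support_copy, hsup]
  have hcyc : c.IsCycle := by
    rw [SimpleGraph.Walk.isCycle_def]
    refine ⟨⟨?_⟩, ?_, ?_⟩
    · -- edges nodup
      rw [hcedges]
      refine List.Nodup.map_on ?_ List.nodup_range
      intro t ht u hu hgtu
      rw [List.mem_range] at ht hu
      rcases Nat.lt_trichotomy t u with h | h | h
      · exfalso
        rcases Sym2.eq_iff.1 hgtu with ⟨h1, _⟩ | ⟨h1, h2⟩
        · exact K t u h (by omega) (Or.inr (by omega)) h1
        · rcases Nat.lt_or_ge (u + 1) (2 * m) with hu1 | hu1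
          · exact K t (u + 1) (by omega) (by omega) (Or.inr hu1) h1
          · have hu2m : u + 1 = 2 * m := by omega
            rw [hu2m, hm2] at h1
            rcases Nat.eq_zero_or_pos t with rfl | ht0
            · -- t = 0 : seq 1 = seq u with u = 2m - 1
              exact K 1 u (by omega) (by omega) (Or.inl one_pos) h2
            · exact K 0 t ht0 (by omega) (Or.inr (by omega)) h1.symm
      · exact h
      · exfalso
        rcases Sym2.eq_iff.1 hgtu with ⟨h1, _⟩ | ⟨h1, h2⟩
        · exact K u t h (by omega) (Or.inr (by omega)) h1.symm
        · rcases Nat.lt_or_ge (t + 1) (2 * m) with ht1 | ht1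
          · exact K u (t + 1) (by omega) (by omega) (Or.inr ht1) h2.symm
          · have ht2m : t + 1 = 2 * m := by omega
            rw [ht2m, hm2] at h2
            rcases Nat.eq_zero_or_pos u with rfl | hu0
            · exact K 1 t (by omega) (by omega) (Or.inl one_pos) h1.symm
            · exact K 0 u hu0 (by omega) (Or.inr (by omega)) h2
    · -- not nil
      intro hnil
      have : c.length = 0 := by rw [hnil]; rfl
      omega
    · -- support tail nodup
      rw [hcsup, List.range_succ_eq_map, List.map_cons, List.tail_cons, List.map_map]
      refine List.Nodup.map_on ?_ List.nodup_range
      intro t ht u hu hgtu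
      rw [List.mem_range] at ht hu
      simp only [Function.comp] at hgtu
      rcases Nat.lt_trichotomy t u with h | h | h
      · exact absurd hgtu (K (t + 1) (u + 1) (by omega) (by omega) (Or.inl (by omega)))
      · exact h
      · exact absurd hgtu.symm (K (u + 1) (t + 1) (by omega) (by omega) (Or.inl (by omega)))
  have heven : Even c.length := by rw [hclen]; exact ⟨m, by omega⟩
  have hmem : s(v, w) ∈ c.edges := by
    rw [hcedges]
    refine List.mem_map.2 ⟨2 * m - 1, List.mem_range.2 (by omega), ?_⟩
    rw [hlast, show 2 * m - 1 + 1 = 2 * m by omega, hm2, Sym2.eq_swap]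
  exact he v c hcyc heven hmem

end Key


section Decomp

variable {G : SimpleGraph V} {S : Finset V} {v w : V}

lemma pms_of_del {E : Set (Sym2 V)} (h : IsPMS (G.deleteEdges E) S) : IsPMS G S := by
  obtain ⟨M, ⟨hsub, hdisj⟩, hcov⟩ := h
  refine ⟨M, ⟨?_, hdisj⟩, hcov⟩
  refine hsub.trans ?_
  rw [SimpleGraph.edgeSet_deleteEdges]
  exact Set.diff_subset

lemma insert_pms [DecidableEq V] (hvw : G.Adj v w) (hv : v ∈ S) (hw : w ∈ S)
    (h : IsPMS G ((S.erase v).erase w)) :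
    ∃ M, IsPerfectMatchingOn G M S ∧ s(v, w) ∈ M := by
  obtain ⟨M, ⟨hsub, hdisj⟩, hcov⟩ := h
  have hT : ∀ x, x ∈ (S.erase v).erase w → x ≠ v ∧ x ≠ w ∧ x ∈ S := by
    intro x hx
    simp only [Finset.mem_erase] at hx
    exact ⟨hx.2.1, hx.1, hx.2.2⟩
  have hMx : ∀ f ∈ M, ∀ x ∈ f, x ≠ v ∧ x ≠ w ∧ x ∈ S := by
    intro f hf x hx
    exact hT x ((hcov x).2 ⟨f, hf, hx⟩)
  have heM : s(v, w) ∉ M := by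
    intro hmem
    exact (hMx _ hmem v (Sym2.mem_mk_left _ _)).1 rfl
  refine ⟨insert s(v, w) M, ⟨⟨?_, ?_⟩, ?_⟩, Finset.mem_insert_self _ _⟩
  · intro f hf
    rcases Finset.mem_insert.1 hf with rfl | hf
    · exact (SimpleGraph.mem_edgeSet G).2 hvw
    · exact hsub hf
  · intro f hf g hg hfg x hxf
    rcases Finset.mem_insert.1 hf with rfl | hf <;> rcases Finset.mem_insert.1 hg with rfl | hg
    · exact absurd rfl hfg
    · intro hxg
      rcases Sym2.mem_iff.1 hxf with h | h
      · exact (hMx _ hg x hxg).1 h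
      · exact (hMx _ hg x hxg).2.1 h
    · intro hxg
      rcases Sym2.mem_iff.1 hxg with h | h
      · exact (hMx _ hf x hxf).1 h
      · exact (hMx _ hf x hxf).2.1 h
    · exact hdisj f hf g hg hfg x hxf
  · intro x
    constructor
    · intro hxS
      by_cases hxv : x = v
      · exact ⟨s(v, w), Finset.mem_insert_self _ _, by rw [hxv]; exact Sym2.mem_mk_left _ _⟩
      by_cases hxw : x = w
      · exact ⟨s(v, w), Finset.mem_insert_self _ _, by rw [hxw]; exact Sym2.mem_mk_right _ _⟩
      obtain ⟨f, hf, hxf⟩ := (hcov x).1 (by simp [Finset.mem_erase, hxv, hxw, hxS])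
      exact ⟨f, Finset.mem_insert_of_mem hf, hxf⟩
    · rintro ⟨f, hf, hxf⟩
      rcases Finset.mem_insert.1 hf with rfl | hf
      · rcases Sym2.mem_iff.1 hxf with h | h
        · rw [h]; exact hv
        · rw [h]; exact hw
      · exact (hMx _ hf x hxf).2.2

lemma pms_split [DecidableEq V] (h : IsPMS G S) :
    IsPMS (G.deleteEdges {s(v, w)}) S ∨
      (v ∈ S ∧ w ∈ S ∧ IsPMS G ((S.erase v).erase w)) := by
  obtain ⟨M, ⟨hsub, hdisj⟩, hcov⟩ := h
  by_cases heM : s(v, w) ∈ M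
  · right
    have hv : v ∈ S := (hcov v).2 ⟨_, heM, Sym2.mem_mk_left _ _⟩
    have hw : w ∈ S := (hcov w).2 ⟨_, heM, Sym2.mem_mk_right _ _⟩
    refine ⟨hv, hw, M.erase s(v, w), ⟨?_, ?_⟩, ?_⟩
    · intro f hf
      exact hsub (Finset.mem_of_mem_erase hf)
    · intro f hf g hg hfg x hxf
      exact hdisj f (Finset.mem_of_mem_erase hf) g (Finset.mem_of_mem_erase hg) hfg x hxf
    · intro x
      simp only [Finset.mem_erase]
      constructor
      · rintro ⟨hxw, hxv, hxS⟩
        obtain ⟨f, hf, hxf⟩ := (hcov x).1 hxS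
        refine ⟨f, ⟨?_, hf⟩, hxf⟩
        intro hfe
        rw [hfe] at hxf
        rcases Sym2.mem_iff.1 hxf with rfl | rfl
        · exact hxv rfl
        · exact hxw rfl
      · rintro ⟨f, ⟨hfe, hf⟩, hxf⟩
        refine ⟨?_, ?_, (hcov x).2 ⟨f, hf, hxf⟩⟩
        · intro hxw
          exact hdisj _ heM f hf (Ne.symm hfe) x
            (by rw [hxw]; exact Sym2.mem_mk_right _ _) hxf
        · intro hxv
          exact hdisj _ heM f hf (Ne.symm hfe) x
            (by rw [hxv]; exact Sym2.mem_mk_left _ _) hxf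
  · left
    refine ⟨M, ⟨?_, hdisj⟩, hcov⟩
    intro f hf
    rw [SimpleGraph.edgeSet_deleteEdges]
    refine ⟨hsub hf, ?_⟩
    simp only [Set.mem_singleton_iff]
    rintro rfl
    exact heM hf

lemma not_both [Fintype V] [DecidableEq V] (hvw : G.Adj v w)
    (he : ∀ (a : V) (c : G.Walk a a), c.IsCycle → Even c.length → s(v, w) ∉ c.edges)
    (h1 : IsPMS (G.deleteEdges {s(v, w)}) S)
    (hv : v ∈ S) (hw : w ∈ S) (h2 : IsPMS G ((S.erase v).erase w)) : False := by
  obtain ⟨M, ⟨hsub, hdisj⟩, hcov⟩ := h1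
  obtain ⟨M', hM', heM'⟩ := insert_pms hvw hv hw h2
  have heM : s(v, w) ∉ M := by
    intro hmem
    have := hsub hmem
    rw [SimpleGraph.edgeSet_deleteEdges] at this
    exact this.2 rfl
  have hsub' : (M : Set (Sym2 V)) ⊆ G.edgeSet := by
    refine hsub.trans ?_
    rw [SimpleGraph.edgeSet_deleteEdges]
    exact Set.diff_subset
  exact two_matchings_contra hvw ⟨⟨hsub', hdisj⟩, hcov⟩ hM' heM' heM he

end Decomp

end PMSAux

open PMSAux

/-- if the edge `e = vw` lies on no even cycle, then
`p(G; z) = p(G \ e; z) + z·p(G − {v,w}; z)`. -/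
theorem stmt4 [Fintype V] [DecidableEq V] (G : SimpleGraph V) (v w : V) (hvw : G.Adj v w)
    (he : ∀ (a : V) (c : G.Walk a a), c.IsCycle → Even c.length → s(v, w) ∉ c.edges) :
    pmPoly G Finset.univ =
      pmPoly (G.deleteEdges {s(v, w)}) Finset.univ +
        X * pmPoly G ((Finset.univ.erase v).erase w) := by
  classical
  have hvne : v ≠ w := hvw.ne
  have key : ∀ S : Finset V,
      (if IsPMS G S then (X : Polynomial ℤ) ^ (S.card / 2) else 0) =
        (if IsPMS (G.deleteEdges {s(v, w)}) S then (X : Polynomial ℤ) ^ (S.card / 2) else 0) +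
          (if v ∈ S ∧ w ∈ S ∧ IsPMS G ((S.erase v).erase w)
            then (X : Polynomial ℤ) ^ (S.card / 2) else 0) := by
    intro S
    by_cases h1 : IsPMS (G.deleteEdges {s(v, w)}) S
    · by_cases h2 : v ∈ S ∧ w ∈ S ∧ IsPMS G ((S.erase v).erase w)
      · exact absurd (not_both hvw he h1 h2.1 h2.2.1 h2.2.2) not_false
      · rw [if_pos (pms_of_del h1), if_pos h1, if_neg h2, add_zero]
    · by_cases h2 : v ∈ S ∧ w ∈ S ∧ IsPMS G ((S.erase v).erase w)
      · have hpms : IsPMS G S := by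
          obtain ⟨M, hM, _⟩ := insert_pms hvw h2.1 h2.2.1 h2.2.2
          exact ⟨M, hM⟩
        rw [if_pos hpms, if_neg h1, if_pos h2, zero_add]
      · have hpms : ¬ IsPMS G S := by
          intro h
          rcases pms_split (v := v) (w := w) h with h | h
          · exact h1 h
          · exact h2 h
        rw [if_neg hpms, if_neg h1, if_neg h2, add_zero]
  have step1 : pmPoly G Finset.univ =
      pmPoly (G.deleteEdges {s(v, w)}) Finset.univ +
        ∑ S ∈ Finset.univ.powerset,
          (if v ∈ S ∧ w ∈ S ∧ IsPMS G ((S.erase v).erase w)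
            then (X : Polynomial ℤ) ^ (S.card / 2) else 0) := by
    unfold pmPoly
    rw [← Finset.sum_add_distrib]
    exact Finset.sum_congr rfl fun S _ => key S
  have step2 : ∑ S ∈ Finset.univ.powerset,
      (if v ∈ S ∧ w ∈ S ∧ IsPMS G ((S.erase v).erase w)
        then (X : Polynomial ℤ) ^ (S.card / 2) else 0) =
      X * pmPoly G ((Finset.univ.erase v).erase w) := by
    have hrestrict : ∑ S ∈ Finset.univ.powerset,
        (if v ∈ S ∧ w ∈ S ∧ IsPMS G ((S.erase v).erase w)
          then (X : Polynomial ℤ) ^ (S.card / 2) else 0) =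
        ∑ S ∈ Finset.univ.powerset.filter (fun S => v ∈ S ∧ w ∈ S),
          (if v ∈ S ∧ w ∈ S ∧ IsPMS G ((S.erase v).erase w)
            then (X : Polynomial ℤ) ^ (S.card / 2) else 0) := by
      refine (Finset.sum_subset (Finset.filter_subset _ _) ?_).symm
      intro S _ hS
      rw [Finset.mem_filter] at hS
      rw [if_neg]
      intro hcond
      exact hS ⟨Finset.mem_powerset.2 (Finset.subset_univ S), hcond.1, hcond.2.1⟩
    rw [hrestrict]
    have hbij : ∑ S ∈ Finset.univ.powerset.filter (fun S => v ∈ S ∧ w ∈ S),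
        (if v ∈ S ∧ w ∈ S ∧ IsPMS G ((S.erase v).erase w)
          then (X : Polynomial ℤ) ^ (S.card / 2) else 0) =
        ∑ T ∈ ((Finset.univ.erase v).erase w).powerset,
          (if IsPMS G T then (X : Polynomial ℤ) ^ (T.card / 2 + 1) else 0) := by
      refine Finset.sum_bij' (fun S _ => (S.erase v).erase w)
        (fun T _ => insert v (insert w T)) ?_ ?_ ?_ ?_ ?_
      · intro S hS
        rw [Finset.mem_powerset]
        intro x hx
        simp only [Finset.mem_erase] at hx ⊢
        exact ⟨hx.1, hx.2.1, Finset.mem_univ x⟩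
      · intro T hT
        rw [Finset.mem_powerset] at hT
        rw [Finset.mem_filter]
        refine ⟨Finset.mem_powerset.2 (Finset.subset_univ _), Finset.mem_insert_self _ _, ?_⟩
        exact Finset.mem_insert_of_mem (Finset.mem_insert_self _ _)
      · intro S hS
        rw [Finset.mem_filter] at hS
        obtain ⟨_, hv, hw⟩ := hS
        have hw' : w ∈ S.erase v := Finset.mem_erase.2 ⟨fun h => hvne h.symm, hw⟩
        show insert v (insert w ((S.erase v).erase w)) = S
        rw [Finset.insert_erase hw', Finset.insert_erase hv]
      · intro T hT
        rw [Finset.mem_powerset] at hT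
        have hvT : v ∉ insert w T := by
          intro h
          rcases Finset.mem_insert.1 h with h | h
          · exact hvne h
          · have := hT h
            simp only [Finset.mem_erase] at this
            exact this.2.1 rfl
        have hwT : w ∉ T := by
          intro h
          have := hT h
          simp only [Finset.mem_erase] at this
          exact this.1 rfl
        show ((insert v (insert w T)).erase v).erase w = T
        rw [Finset.erase_insert hvT, Finset.erase_insert hwT]
      · intro S hS
        rw [Finset.mem_filter] at hS
        obtain ⟨_, hv, hw⟩ := hS
        have hw' : w ∈ S.erase v := Finset.mem_erase.2 ⟨fun h => hvne h.symm, hw⟩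
        have hc1 : (S.erase v).card = S.card - 1 := Finset.card_erase_of_mem hv
        have hc2 : ((S.erase v).erase w).card = (S.erase v).card - 1 :=
          Finset.card_erase_of_mem hw'
        have hge : 1 ≤ (S.erase v).card := Finset.card_pos.2 ⟨w, hw'⟩
        have hcard : S.card = ((S.erase v).erase w).card + 2 := by omega
        by_cases hp : IsPMS G ((S.erase v).erase w)
        · rw [if_pos ⟨hv, hw, hp⟩, if_pos hp, hcard,
            Nat.add_div_right _ (by norm_num : (0:ℕ) < 2)]
        · rw [if_neg (fun h => hp h.2.2), if_neg hp]
    rw [hbij]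
    unfold pmPoly
    rw [Finset.mul_sum]
    refine Finset.sum_congr rfl fun T _ => ?_
    by_cases hp : IsPMS G T
    · rw [if_pos hp, if_pos hp, pow_succ, mul_comm]
    · rw [if_neg hp, if_neg hp, mul_zero]
  rw [step1, step2]
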